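/- Let W : F_q → O be a discrete memoryless channel that is symmetric with respect to field operations (SOF), and G a non-singular l×l matrix over F_q. Then each split channel W₁^{(i)} : F_q → O^l × F_q^{i−1} obtained from one polarization step with kernel G is again an SOF channel. -/
import Mathlib


/-- A channel `W : F_q → O` is symmetric w.r.t. the field addition: there are
permutations `σ_x` of `O` with `W(y|x) = W(σ_{x'−x}(y)|x')` for all `x, x', y`. -/
def AddSymmetric {Fq O : Type*} [Sub Fq] (W : Fq → O → ℝ) : Prop :=
  ∃ σ : Fq → Equiv.Perm O, ∀ x x' y, W x y = W x' (σ (x' - x) y)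

/-- A channel `W : F_q → O` is symmetric w.r.t. the field product: for each `α ≠ 0`
there is a permutation `ψ_α` of `O` with `W(y|x) = W(ψ_α(y)|αx)` for all `x, y`. -/
def MulSymmetric {Fq O : Type*} [Mul Fq] [Zero Fq] (W : Fq → O → ℝ) : Prop :=
  ∃ ψ : Fq → Equiv.Perm O, ∀ (α : Fq) x y, α ≠ 0 → W x y = W (α * x) (ψ α y)

/-- Symmetric with respect to the field operations (SOF). -/
def SOF {Fq O : Type*} [Field Fq] (W : Fq → O → ℝ) : Prop :=
  AddSymmetric W ∧ MulSymmetric W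

open scoped Classical in
/-- The `i`-th split channel `W₁^{(i)} : F_q → O^l × F_q^{i-1}` of one polarization
step with kernel `G`:
`W₁^{(i)}(y₁^l, u₁^{i−1} | uᵢ) = (1/q^{l−1}) Σ_{u_{i+1}^l} Π_k W(y_k | (uG)_k)`. -/
noncomputable def splitCh {Fq O : Type*} [Field Fq] [Fintype Fq] {l : ℕ}
    (W : Fq → O → ℝ) (G : Matrix (Fin l) (Fin l) Fq) (i : Fin l) :
    Fq → ((Fin l → O) × (Fin i → Fq)) → ℝ :=
  fun ui yu =>
    (1 / (Fintype.card Fq : ℝ) ^ (l - 1)) *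
      ∑ u : Fin l → Fq,
        if u i = ui ∧ ∀ j : Fin i, u (Fin.castLE i.isLt.le j) = yu.2 j then
          ∏ k, W (∑ r, u r * G r k) (yu.1 k)
        else 0

/-- One polarization step with a non-singular kernel `G` over a SOF
channel `W` yields split channels `W₁^{(i)}` that are again SOF channels. -/
theorem splitCh_SOF {Fq O : Type*} [Field Fq] [Fintype Fq] [Fintype O] {l : ℕ}
    (W : Fq → O → ℝ)
    (hW0 : ∀ x y, 0 ≤ W x y) (hW1 : ∀ x, ∑ y, W x y = 1)
    (G : Matrix (Fin l) (Fin l) Fq) (hG : IsUnit G.det)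
    (hSOF : SOF W) :
    ∀ i : Fin l, SOF (splitCh W G i) := by
  classical
  obtain ⟨⟨σ, hσ⟩, ⟨ψ, hψ⟩⟩ := hSOF
  intro i
  constructor
  · -- additive symmetry
    refine ⟨fun d => Equiv.prodCongr (Equiv.piCongrRight fun k => σ (d * G i k))
        (Equiv.refl _), ?_⟩
    intro x x' yu
    unfold splitCh
    congr 1
    set d := x' - x with hd
    set t : Fin l → Fq := fun r => if r = i then d else 0 with ht
    refine Fintype.sum_equiv (Equiv.addRight t) _ _ ?_
    intro u
    have hti : (u + t) i = u i + d := by simp [ht]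
    have hcond : (u i = x ∧ ∀ j : Fin i, u (Fin.castLE i.isLt.le j) = yu.2 j) ↔
        ((u + t) i = x' ∧ ∀ j : Fin i, (u + t) (Fin.castLE i.isLt.le j) = yu.2 j) := by
      have hne : ∀ j : Fin i, Fin.castLE i.isLt.le j ≠ i := by
        intro j h
        have := congrArg Fin.val h
        simp at this
        omega
      constructor
      · rintro ⟨h1, h2⟩
        refine ⟨by rw [hti, h1, hd]; ring, fun j => ?_⟩
        simp [ht, hne j, h2 j]
      · rintro ⟨h1, h2⟩
        refine ⟨?_, fun j => ?_⟩
        · rw [hti] at h1; rw [hd] at h1; linear_combination h1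
        · have := h2 j; simpa [ht, hne j] using this
    simp only [Equiv.coe_addRight, Equiv.prodCongr_apply, Equiv.coe_refl, Prod.map_snd,
      Prod.map_fst, id_eq]
    rw [if_congr hcond rfl rfl]
    by_cases hc : (u + t) i = x' ∧ ∀ j : Fin i, (u + t) (Fin.castLE i.isLt.le j) = yu.2 j
    · rw [if_pos hc, if_pos hc]
      refine Finset.prod_congr rfl fun k _ => ?_
      have hsum : ∑ r, (u + t) r * G r k = (∑ r, u r * G r k) + d * G i k := by
        simp only [Pi.add_apply, add_mul, Finset.sum_add_distrib, ht]
        congr 1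
        rw [Finset.sum_congr rfl (fun r _ => by rw [ite_mul, zero_mul])]
        simp
      rw [hsum]
      have := hσ (∑ r, u r * G r k) ((∑ r, u r * G r k) + d * G i k) (yu.1 k)
      simpa using this
    · rw [if_neg hc, if_neg hc]
  · -- multiplicative symmetry
    refine ⟨fun α => if h : α = 0 then Equiv.refl _ else
        Equiv.prodCongr (Equiv.piCongrRight fun k => ψ α)
          (Equiv.piCongrRight fun j => Equiv.mulLeft₀ α h), ?_⟩
    intro α x yu hα
    unfold splitCh
    congr 1
    refine Fintype.sum_equiv (Equiv.piCongrRight fun _ : Fin l => Equiv.mulLeft₀ α hα) _ _ ?_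
    intro u
    simp only [dif_neg hα, Equiv.prodCongr_apply, Prod.map_fst, Prod.map_snd,
      Equiv.piCongrRight_apply, Equiv.mulLeft₀_apply, Pi.map_apply]
    have hcond : (u i = x ∧ ∀ j : Fin i, u (Fin.castLE i.isLt.le j) = yu.2 j) ↔
        (α * u i = α * x ∧ ∀ j : Fin i, α * u (Fin.castLE i.isLt.le j) = α * yu.2 j) := by
      constructor
      · rintro ⟨h1, h2⟩
        exact ⟨by rw [h1], fun j => by rw [h2 j]⟩
      · rintro ⟨h1, h2⟩
        exact ⟨mul_left_cancel₀ hα h1, fun j => mul_left_cancel₀ hα (h2 j)⟩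
    rw [if_congr hcond rfl rfl]
    by_cases hc : α * u i = α * x ∧ ∀ j : Fin i, α * u (Fin.castLE i.isLt.le j) = α * yu.2 j
    · rw [if_pos hc, if_pos hc]
      refine Finset.prod_congr rfl fun k _ => ?_
      have hsum : ∑ r, α * u r * G r k = α * ∑ r, u r * G r k := by
        simp only [Finset.mul_sum, mul_assoc]
      rw [hsum]
      exact hψ α (∑ r, u r * G r k) (yu.1 k) hα
    · rw [if_neg hc, if_neg hc]
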